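/- Let K be a field, R a commutative K-algebra, and σ : R → R a K-algebra homomorphism such that R, regarded as an R-module via σ (i.e., with scalar action r · x = σ(r)x), is a free module of finite rank d with d ≥ 2. Let T be an R-module that is finite-dimensional as a K-vector space. If there is an isomorphism of R-modules between the base change R ⊗_{R,σ} T of T along σ and T itself, then T = 0. -/

import Mathlib

open TensorProduct

/-- `Twist R σ` is the ring `R` regarded as an `R`-algebra (hence an `R`-module) via the
ring endomorphism `σ : R → R`. -/
def Twist (R : Type*) [CommRing R] (σ : R →+* R) : Type _ := R

instance Twist.instCommRing (R : Type*) [CommRing R] (σ : R →+* R) :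
    CommRing (Twist R σ) := inferInstanceAs (CommRing R)

instance Twist.instAlgebra (R : Type*) [CommRing R] (σ : R →+* R) :
    Algebra R (Twist R σ) := (show R →+* Twist R σ from σ).toAlgebra

/-- Any `R`-module is a module over the ring `Twist R σ` (which is just `R`). -/
instance (priority := 50) Twist.instModule (R : Type*) [CommRing R] (σ : R →+* R)
    (T : Type*) [AddCommGroup T] [Module R T] : Module (Twist R σ) T :=
  inferInstanceAs (Module R T)

/-- If `σ : R → R` is a `K`-algebra endomorphism making `R` a free `R`-module of finite
rank `d ≥ 2` (via `σ`), and `T` is an `R`-module which is finite-dimensional over `K`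
such that the base change `R ⊗_{R,σ} T` of `T` along `σ` is isomorphic to `T` as an
`R`-module, then `T = 0`. -/
theorem subsingleton_of_frobenius_baseChange_iso {K R T : Type*} [Field K] [CommRing R]
    [Algebra K R] [AddCommGroup T] [Module R T] [Module K T] [IsScalarTower K R T]
    [FiniteDimensional K T] (σ : R →ₐ[K] R) (d : ℕ) (hd : 2 ≤ d)
    [Module.Free R (Twist R σ.toRingHom)] [Module.Finite R (Twist R σ.toRingHom)]
    (hrank : Module.finrank R (Twist R σ.toRingHom) = d)
    (hiso : Nonempty ((Twist R σ.toRingHom ⊗[R] T) ≃ₗ[Twist R σ.toRingHom] T)) :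
    Subsingleton T := by
  rcases subsingleton_or_nontrivial R with hR | hR
  · exact Module.subsingleton R T
  set A := Twist R σ.toRingHom with hA
  letI : Module K A := (Algebra.toModule : Module K R)
  let c : R → A := fun r => r
  have hk : ∀ (k : K) (y : A), k • y = c (algebraMap K R k) * y := fun k y =>
    Algebra.smul_def (A := R) k y
  have hr : ∀ (r : R) (y : A), r • y = c (σ r) * y := fun r y => rfl
  haveI : SMulCommClass R K A := ⟨fun r k x => by
    rw [hr, hk, hr, hk, mul_left_comm]⟩
  haveI : IsScalarTower K R A := ⟨fun k r x => by
    have h2 : σ (k • r) = algebraMap K R k * σ r := by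
      rw [Algebra.smul_def, map_mul, AlgHom.commutes]
    rw [hr, hr, h2, hk]
    show c (algebraMap K R k * σ r) * x = c (algebraMap K R k) * (c (σ r) * x)
    rw [show ∀ a b : R, c (a * b) = c a * c b from fun _ _ => rfl, mul_assoc]⟩
  haveI : IsScalarTower K A A := ⟨fun k a x => by
    rw [hk k a, hk k (a • x)]
    show (c (algebraMap K R k) * a) * x = c (algebraMap K R k) * (a * x)
    rw [mul_assoc]⟩
  let c' : A → R := fun x => x
  haveI : IsScalarTower K A T := ⟨fun k a t => by
    rw [hk k a]
    show (algebraMap K R k * c' a) • t = k • (c' a • t)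
    rw [mul_smul, algebraMap_smul]⟩
  obtain ⟨e⟩ := hiso
  let ι := Module.Free.ChooseBasisIndex R A
  let b : Module.Basis ι R A := Module.Free.chooseBasis R A
  have hcard : Fintype.card ι = d := by
    rw [← hrank, Module.finrank_eq_card_chooseBasisIndex]
  let e1 : A ⊗[R] T ≃ₗ[R] (ι → T) :=
    ((TensorProduct.congr b.repr (LinearEquiv.refl R T)).trans
      (TensorProduct.finsuppScalarLeft R T ι)).trans
      (Finsupp.linearEquivFunOnFinite R T ι)
  have h1 : Module.finrank K (A ⊗[R] T) = d * Module.finrank K T := by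
    rw [(e1.restrictScalars K).finrank_eq, Module.finrank_pi_fintype,
      Finset.sum_const, Finset.card_univ, hcard, smul_eq_mul]
  have h2 : Module.finrank K (A ⊗[R] T) = Module.finrank K T :=
    (e.restrictScalars K).finrank_eq
  have hT : Module.finrank K T = 0 := by
    by_contra h
    have := h1.symm.trans h2
    nlinarith [Nat.pos_of_ne_zero h]
  exact Module.finrank_zero_iff.mp hT
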